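/- If g is an invertible n×n matrix over a field and b is an invertible upper triangular n×n matrix, then Δ_{gb}(S) = Δ_g(S) for every k-uniform hypergraph S ⊆ binom([n], k). -/

import Mathlib

open Finset
open scoped symmDiff

/-- The type of `k`-element subsets of `[n]`. -/
def KSet (n k : ℕ) := {s : Finset (Fin n) // s.card = k}

instance {n k : ℕ} : Fintype (KSet n k) := by unfold KSet; infer_instance
instance {n k : ℕ} : DecidableEq (KSet n k) := by unfold KSet; infer_instance

/-- Lexicographic strict order on finsets: `s <lex t` iff the minimum of the
symmetric difference `s ∆ t` belongs to `s`. -/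
def lexLt {n : ℕ} (s t : Finset (Fin n)) : Prop :=
  ∃ a, a ∈ s \ t ∧ ∀ b ∈ s ∆ t, a ≤ b

/-- The `k`-th compound matrix of `g`. -/
def compound {F : Type*} [Field F] {n : ℕ} (g : Matrix (Fin n) (Fin n) F) (k : ℕ) :
    Matrix (KSet n k) (KSet n k) F :=
  fun σ τ => (Matrix.of fun a b : Fin k =>
    g (σ.1.orderIsoOfFin σ.2 a) (τ.1.orderIsoOfFin τ.2 b)).det

/-- The column of the matrix `g^{∧S}` (rows of the `k`-th compound matrix of `g`
indexed by the hypergraph `S`) corresponding to the `k`-set `σ`. -/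
def shiftCol {F : Type*} [Field F] {n k : ℕ} (g : Matrix (Fin n) (Fin n) F)
    (S : Finset (KSet n k)) (σ : KSet n k) : {ρ // ρ ∈ S} → F :=
  fun ρ => compound g k ρ.1 σ

/-- The partial exterior shift `Δ_g(S)`: those `σ` whose column of `g^{∧S}` is
not in the span of the lexicographically earlier columns. -/
def Delta {F : Type*} [Field F] {n k : ℕ} (g : Matrix (Fin n) (Fin n) F)
    (S : Finset (KSet n k)) : Set (KSet n k) :=
  {σ | shiftCol g S σ ∉
    Submodule.span F (shiftCol g S '' {ρ : KSet n k | lexLt ρ.1 σ.1})}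


lemma lexLt_irrefl {n : ℕ} (s : Finset (Fin n)) : ¬ lexLt s s := by
  rintro ⟨a, ha, -⟩; simp at ha

lemma lexLt_trans {n : ℕ} {s t u : Finset (Fin n)} (h1 : lexLt s t) (h2 : lexLt t u) :
    lexLt s u := by
  obtain ⟨a, ha, hamin⟩ := h1
  obtain ⟨c, hc, hcmin⟩ := h2
  rw [Finset.mem_sdiff] at ha hc
  have tri : s ∆ u ⊆ s ∆ t ∪ t ∆ u := by
    simpa [Finset.sup_eq_union] using symmDiff_triangle s t u
  rcases lt_trichotomy a c with hac | hac | hac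
  · refine ⟨a, ?_, ?_⟩
    · rw [Finset.mem_sdiff]
      refine ⟨ha.1, fun hau => ?_⟩
      have : a ∈ t ∆ u := by simp [Finset.mem_symmDiff, ha.2, hau]
      exact absurd (hcmin a this) (by omega)
    · intro x hx
      rcases Finset.mem_union.1 (tri hx) with h | h
      · exact hamin x h
      · exact le_trans (le_of_lt hac) (hcmin x h)
  · exact absurd hac (by rintro rfl; exact ha.2 hc.1)
  · refine ⟨c, ?_, ?_⟩
    · rw [Finset.mem_sdiff]
      refine ⟨?_, hc.2⟩
      by_contra hcs
      have : c ∈ s ∆ t := by simp [Finset.mem_symmDiff, hcs, hc.1]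
      exact absurd (hamin c this) (by omega)
    · intro x hx
      rcases Finset.mem_union.1 (tri hx) with h | h
      · exact le_trans (le_of_lt hac) (hamin x h)
      · exact hcmin x h

lemma lexLt_total {n : ℕ} {s t : Finset (Fin n)} (h : s ≠ t) : lexLt s t ∨ lexLt t s := by
  have hne : (s ∆ t).Nonempty := by
    rw [Finset.nonempty_iff_ne_empty]
    intro h0
    apply h
    ext a
    constructor <;> intro ha <;> by_contra hb
    · exact absurd (h0 ▸ Finset.mem_symmDiff.2 (Or.inl ⟨ha, hb⟩)) (Finset.notMem_empty a)
    · exact absurd (h0 ▸ Finset.mem_symmDiff.2 (Or.inr ⟨ha, hb⟩)) (Finset.notMem_empty a)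
  obtain ⟨a, ham, hamin⟩ := (s ∆ t).exists_min_image id hne
  rcases Finset.mem_symmDiff.1 ham with ⟨h1, h2⟩ | ⟨h1, h2⟩
  · exact Or.inl ⟨a, Finset.mem_sdiff.2 ⟨h1, h2⟩, fun b hb => hamin b hb⟩
  · refine Or.inr ⟨a, Finset.mem_sdiff.2 ⟨h1, h2⟩, fun b hb => hamin b ?_⟩
    rwa [symmDiff_comm]

def emb {n k : ℕ} (σ : KSet n k) : Fin k → Fin n := fun i => σ.1.orderIsoOfFin σ.2 i

lemma emb_strictMono {n k : ℕ} (σ : KSet n k) : StrictMono (emb σ) := fun i j hij => by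
  simpa [emb] using (σ.1.orderIsoOfFin σ.2).strictMono hij

lemma emb_injective {n k : ℕ} (σ : KSet n k) : Function.Injective (emb σ) :=
  (emb_strictMono σ).injective

lemma emb_image {n k : ℕ} (σ : KSet n k) : Finset.image (emb σ) Finset.univ = σ.1 := by
  ext x
  simp only [Finset.mem_image, Finset.mem_univ, true_and, emb]
  constructor
  · rintro ⟨i, rfl⟩; exact (σ.1.orderIsoOfFin σ.2 i).2
  · intro hx; exact ⟨(σ.1.orderIsoOfFin σ.2).symm ⟨x, hx⟩, by simp⟩

lemma cauchyBinet {F : Type*} [Field F] {k n : ℕ} (A : Matrix (Fin k) (Fin n) F)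
    (B : Matrix (Fin n) (Fin k) F) :
    (A * B).det = ∑ τ : KSet n k, (A.submatrix id (emb τ)).det * (B.submatrix (emb τ) id).det := by
  have h1 : (A * B).det = ∑ f : Fin k → Fin n, (∏ i, A i (f i)) * (B.submatrix f id).det := by
    have harg : (A * B) = Matrix.of (fun i => ∑ x : Fin n, A i x • B x) := by
      funext i j
      simp [Matrix.mul_apply, Finset.sum_apply]
    calc (A * B).det
        = (Matrix.detRowAlternating (R := F) (n := Fin k)).toMultilinearMap
            (fun i => ∑ x : Fin n, A i x • B x) := by rw [harg]; rfl
      _ = ∑ f : Fin k → Fin n, (Matrix.detRowAlternating (R := F) (n := Fin k)).toMultilinearMap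
            (fun i => A i (f i) • B (f i)) :=
          MultilinearMap.map_sum _ (fun (i : Fin k) (x : Fin n) => A i x • B x)
      _ = ∑ f : Fin k → Fin n, (∏ i, A i (f i)) * (B.submatrix f id).det := by
          refine Finset.sum_congr rfl fun f _ => ?_
          rw [show ((Matrix.detRowAlternating (R := F) (n := Fin k)).toMultilinearMap
              (fun i => A i (f i) • B (f i)))
            = (Matrix.detRowAlternating (R := F) (n := Fin k)).toMultilinearMap
              (fun i => (fun j => A j (f j)) i • (fun j => B (f j)) i) from rfl]
          rw [MultilinearMap.map_smul_univ]
          rw [smul_eq_mul]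
          rfl
  rw [h1]
  rw [← Finset.sum_filter_add_sum_filter_not Finset.univ (fun f => Function.Injective f)]
  have h2 : ∑ f ∈ Finset.univ.filter (fun f => ¬ Function.Injective f),
      (∏ i, A i (f i)) * (B.submatrix f id).det = 0 := by
    refine Finset.sum_eq_zero fun f hf => ?_
    have hf' : ¬ Function.Injective f := (Finset.mem_filter.1 hf).2
    simp only [Function.Injective] at hf'
    push_neg at hf'
    obtain ⟨i, j, hij, hne⟩ := hf'
    have : (B.submatrix f id).det = 0 :=
      Matrix.det_zero_of_row_eq hne (by funext x; simp [Matrix.submatrix, hij])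
    rw [this, mul_zero]
  rw [h2, add_zero]
  rw [show ∑ τ : KSet n k, (A.submatrix id (emb τ)).det * (B.submatrix (emb τ) id).det
      = ∑ p : KSet n k × Equiv.Perm (Fin k),
        (∏ i, A i (emb p.1 (p.2 i))) * (B.submatrix (emb p.1 ∘ p.2) id).det from ?_]
  · -- sum_bij between injective functions and pairs
    refine (Finset.sum_bij (fun (p : KSet n k × Equiv.Perm (Fin k)) _ => emb p.1 ∘ p.2)
      ?_ ?_ ?_ ?_).symm
    · intro p _
      simp only [Finset.mem_filter, Finset.mem_univ, true_and]
      exact (emb_injective p.1).comp p.2.injective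
    · rintro ⟨τ, π⟩ hm1 ⟨τ', π'⟩ hm2 hfe
      have hfe' : emb τ ∘ ⇑π = emb τ' ∘ ⇑π' := hfe
      clear hfe
      have key : ∀ (ρ : KSet n k) (ε : Equiv.Perm (Fin k)),
          Finset.image (emb ρ ∘ ε) Finset.univ = ρ.1 := by
        intro ρ ε
        rw [show Finset.image (emb ρ ∘ ε) Finset.univ
            = Finset.image (emb ρ) (Finset.image ε Finset.univ) from
          (Finset.image_image ..).symm]
        rw [Finset.image_univ_equiv]
        exact emb_image ρ
      have himg : τ.1 = τ'.1 := by
        rw [← key τ π, ← key τ' π', hfe']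
      have hττ' : τ = τ' := Subtype.ext himg
      subst hττ'
      refine Prod.ext rfl ?_
      ext i
      exact congrArg Fin.val (emb_injective τ (congrFun hfe' i))
    · intro f hf
      simp only [Finset.mem_filter, Finset.mem_univ, true_and] at hf
      have hcard : (Finset.image f Finset.univ).card = k := by
        rw [Finset.card_image_of_injective _ hf, Finset.card_univ, Fintype.card_fin]
      set τ : KSet n k := ⟨Finset.image f Finset.univ, hcard⟩ with hτ
      have hmem : ∀ i, f i ∈ τ.1 := fun i => Finset.mem_image_of_mem f (Finset.mem_univ i)
      set π0 : Fin k → Fin k := fun i => (τ.1.orderIsoOfFin τ.2).symm ⟨f i, hmem i⟩ with hπ0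
      have hπ0inj : Function.Injective π0 := by
        intro i j hij
        apply hf
        have := congrArg (fun x => ((τ.1.orderIsoOfFin τ.2) x : Fin n)) hij
        simpa [π0] using this
      have hπ0bij : Function.Bijective π0 := (Finite.injective_iff_bijective).1 hπ0inj
      refine ⟨⟨τ, Equiv.ofBijective π0 hπ0bij⟩, Finset.mem_univ _, ?_⟩
      funext i
      simp [emb, π0, Equiv.ofBijective]
    · intro p _
      rfl
  · rw [Fintype.sum_prod_type]
    refine Finset.sum_congr rfl fun τ _ => ?_
    have hdet : ∀ π : Equiv.Perm (Fin k), (B.submatrix (emb τ ∘ π) id).det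
        = ((Equiv.Perm.sign π : ℤ) : F) * (B.submatrix (emb τ) id).det := by
      intro π
      rw [show B.submatrix (emb τ ∘ π) id = (B.submatrix (emb τ) id).submatrix π id from rfl]
      exact_mod_cast Matrix.det_permute π _
    symm
    calc ∑ π : Equiv.Perm (Fin k), (∏ i, A i (emb τ (π i))) * (B.submatrix (emb τ ∘ π) id).det
        = (∑ π : Equiv.Perm (Fin k), ((Equiv.Perm.sign π : ℤ) : F) * ∏ i, A i (emb τ (π i)))
            * (B.submatrix (emb τ) id).det := by
          rw [Finset.sum_mul]
          refine Finset.sum_congr rfl fun π _ => ?_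
          rw [hdet π]; ring
      _ = (A.submatrix id (emb τ)).det * (B.submatrix (emb τ) id).det := by
          congr 1
          rw [Matrix.det_apply']
          rw [← Equiv.sum_comp (Equiv.inv (Equiv.Perm (Fin k)))
            (fun π : Equiv.Perm (Fin k) =>
              ((Equiv.Perm.sign π : ℤ) : F) * ∏ i, (A.submatrix id (emb τ)) (π i) i)]
          refine Finset.sum_congr rfl fun π _ => ?_
          simp only [Equiv.inv_apply, Equiv.Perm.sign_inv]
          congr 1
          calc ∏ i, A i (emb τ (π i))
              = ∏ i, A (π⁻¹ (π i)) (emb τ (π i)) := by simp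
            _ = ∏ i, A (π⁻¹ i) (emb τ i) :=
                Equiv.prod_comp π (fun i => A (π⁻¹ i) (emb τ i))
            _ = ∏ i, (A.submatrix id (emb τ)) (π⁻¹ i) i := rfl


section Aux
variable {F : Type*} [Field F] {n k : ℕ}

lemma compound_eq_det (g : Matrix (Fin n) (Fin n) F) (ρ σ : KSet n k) :
    compound g k ρ σ = (g.submatrix (emb ρ) (emb σ)).det := rfl

lemma compound_mul (g b : Matrix (Fin n) (Fin n) F) (ρ σ : KSet n k) :
    compound (g * b) k ρ σ = ∑ τ : KSet n k, compound g k ρ τ * compound b k τ σ := by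
  rw [compound_eq_det]
  have hsub : (g * b).submatrix (emb ρ) (emb σ)
      = (g.submatrix (emb ρ) id) * (b.submatrix id (emb σ)) := by
    ext p q
    simp [Matrix.mul_apply]
  rw [hsub, cauchyBinet]
  exact Finset.sum_congr rfl fun τ _ => rfl

lemma compound_triangular {b : Matrix (Fin n) (Fin n) F}
    (htri : ∀ i j : Fin n, j < i → b i j = 0) {τ σ : KSet n k}
    (hne : τ ≠ σ) (hnlt : ¬ lexLt τ.1 σ.1) : compound b k τ σ = 0 := by
  have hne1 : σ.1 ≠ τ.1 := fun h => hne (Subtype.ext h.symm)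
  have hlt : lexLt σ.1 τ.1 := ((lexLt_total hne1).resolve_right hnlt)
  obtain ⟨a, hamem, hamin⟩ := hlt
  rw [Finset.mem_sdiff] at hamem
  obtain ⟨haσ, haτ⟩ := hamem
  set m : Fin k := (σ.1.orderIsoOfFin σ.2).symm ⟨a, haσ⟩ with hm
  have hσm : emb σ m = a := by simp [emb, hm]
  -- elements of τ below a are in σ and vice versa
  have hcommon : τ.1.filter (· < a) = σ.1.filter (· < a) := by
    ext x
    simp only [Finset.mem_filter, and_congr_left_iff]
    intro hx
    constructor
    · intro hxτ
      by_contra hxσ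
      have : x ∈ σ.1 ∆ τ.1 := Finset.mem_symmDiff.2 (Or.inr ⟨hxτ, hxσ⟩)
      exact absurd (hamin x this) (not_le.2 hx)
    · intro hxσ
      by_contra hxτ
      have : x ∈ σ.1 ∆ τ.1 := Finset.mem_symmDiff.2 (Or.inl ⟨hxσ, hxτ⟩)
      exact absurd (hamin x this) (not_le.2 hx)
  -- card of the filter on indices
  have hσidx : Finset.univ.filter (fun q => emb σ q < a) = Finset.Iio m := by
    ext q
    simp only [Finset.mem_filter, Finset.mem_univ, true_and, Finset.mem_Iio]
    rw [← hσm]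
    exact (emb_strictMono σ).lt_iff_lt
  have hτcard : (Finset.univ.filter (fun p => emb τ p < a)).card = (m : ℕ) := by
    have h1 : ∀ (ρ : KSet n k), ρ.1.filter (· < a)
        = (Finset.univ.filter (fun q => emb ρ q < a)).image (emb ρ) := by
      intro ρ
      rw [← emb_image ρ, Finset.filter_image]
    have h2 : (Finset.univ.filter (fun p => emb τ p < a)).card
        = (τ.1.filter (· < a)).card := by
      rw [h1 τ, Finset.card_image_of_injective _ (emb_injective τ)]
    have h3 : (σ.1.filter (· < a)).card
        = (Finset.univ.filter (fun q => emb σ q < a)).card := by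
      rw [h1 σ, Finset.card_image_of_injective _ (emb_injective σ)]
    rw [h2, hcommon, h3, hσidx, Fin.card_Iio]
  -- for p ≥ m, a < emb τ p
  have hτbig : ∀ p : Fin k, m ≤ p → a < emb τ p := by
    intro p hp
    rcases lt_trichotomy a (emb τ p) with h | h | h
    · exact h
    · exfalso
      apply haτ
      rw [h, ← emb_image τ]
      exact Finset.mem_image_of_mem _ (Finset.mem_univ p)
    · exfalso
      have hsub : Finset.Iic p ⊆ Finset.univ.filter (fun q => emb τ q < a) := by
        intro q hq
        simp only [Finset.mem_filter, Finset.mem_univ, true_and]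
        exact lt_of_le_of_lt ((emb_strictMono τ).monotone (Finset.mem_Iic.1 hq)) h
      have := Finset.card_le_card hsub
      rw [Fin.card_Iic, hτcard] at this
      omega
  have hσsmall : ∀ q : Fin k, q ≤ m → emb σ q ≤ a :=
    fun q hq => hσm ▸ (emb_strictMono σ).monotone hq
  -- zero block ⇒ det = 0
  rw [compound_eq_det, Matrix.det_apply']
  refine Finset.sum_eq_zero fun π _ => ?_
  have hqex : ∃ q : Fin k, q ≤ m ∧ m ≤ π q := by
    by_contra hno
    push_neg at hno
    have hmap : ∀ q ∈ Finset.Iic m, π q ∈ Finset.Iio m := by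
      intro q hq
      exact Finset.mem_Iio.2 (hno q (Finset.mem_Iic.1 hq))
    have hcard : (Finset.Iio m).card < (Finset.Iic m).card := by
      rw [Fin.card_Iio, Fin.card_Iic]; omega
    obtain ⟨x, -, y, -, hxy, hfxy⟩ :=
      Finset.exists_ne_map_eq_of_card_lt_of_maps_to hcard hmap
    exact hxy (π.injective hfxy)
  obtain ⟨q, hq1, hq2⟩ := hqex
  have : (Matrix.submatrix b (emb τ) (emb σ)) (π q) q = 0 :=
    htri _ _ (lt_of_le_of_lt (hσsmall q hq1) (hτbig (π q) hq2))
  rw [Finset.prod_eq_zero (f := fun i => (b.submatrix (emb τ) (emb σ)) (π i) i)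
    (Finset.mem_univ q) this, mul_zero]

lemma compound_diag {b : Matrix (Fin n) (Fin n) F} (hb : IsUnit b.det)
    (htri : ∀ i j : Fin n, j < i → b i j = 0) (σ : KSet n k) :
    compound b k σ σ ≠ 0 := by
  have hbt : b.BlockTriangular id := fun i j h => htri i j h
  have hdetb : b.det = ∏ i, b i i := Matrix.det_of_upperTriangular hbt
  have hdiag : ∀ i, b i i ≠ 0 := by
    have : (∏ i, b i i) ≠ 0 := hdetb ▸ hb.ne_zero
    exact fun i => Finset.prod_ne_zero_iff.1 this i (Finset.mem_univ i)
  have hbt2 : (b.submatrix (emb σ) (emb σ)).BlockTriangular id := by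
    intro p q h
    exact htri _ _ (emb_strictMono σ h)
  rw [compound_eq_det, Matrix.det_of_upperTriangular hbt2]
  exact Finset.prod_ne_zero_iff.2 fun i _ => hdiag (emb σ i)

end Aux

/-- Multiplying `g` on the right by an invertible upper triangular matrix does
not change the partial shift: `Δ_{gb}(S) = Δ_g(S)`. -/
theorem Delta_mul_upperTriangular {F : Type*} [Field F] {n k : ℕ}
    (g b : Matrix (Fin n) (Fin n) F) (hg : IsUnit g.det) (hb : IsUnit b.det)
    (htri : ∀ i j : Fin n, j < i → b i j = 0) (S : Finset (KSet n k)) :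
    Delta (g * b) S = Delta g S := by
  classical
  have hWF : WellFounded (fun σ τ : KSet n k => lexLt σ.1 τ.1) := by
    have h1 : IsTrans (KSet n k) (fun σ τ : KSet n k => lexLt σ.1 τ.1) :=
      ⟨fun _ _ _ => lexLt_trans⟩
    have h2 : IsIrrefl (KSet n k) (fun σ τ : KSet n k => lexLt σ.1 τ.1) :=
      ⟨fun σ => lexLt_irrefl σ.1⟩
    exact Finite.wellFounded_of_trans_of_irrefl _
  set v : KSet n k → ({ρ // ρ ∈ S} → F) := shiftCol g S with hv
  set v' : KSet n k → ({ρ // ρ ∈ S} → F) := shiftCol (g * b) S with hv'def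
  set c : KSet n k → F := fun σ => compound b k σ σ with hcdef
  have hc : ∀ σ, c σ ≠ 0 := fun σ => compound_diag hb htri σ
  have hv' : ∀ σ, v' σ = ∑ τ : KSet n k, compound b k τ σ • v τ := by
    intro σ
    funext ρ
    simp only [hv'def, hv, shiftCol, Finset.sum_apply, Pi.smul_apply, smul_eq_mul]
    rw [compound_mul]
    exact Finset.sum_congr rfl fun τ _ => mul_comm _ _
  set sp : KSet n k → Submodule F ({ρ // ρ ∈ S} → F) :=
    fun σ => Submodule.span F (v '' {ρ : KSet n k | lexLt ρ.1 σ.1}) with hspdef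
  set sp' : KSet n k → Submodule F ({ρ // ρ ∈ S} → F) :=
    fun σ => Submodule.span F (v' '' {ρ : KSet n k | lexLt ρ.1 σ.1}) with hsp'def
  have hmono : ∀ (w : KSet n k → ({ρ // ρ ∈ S} → F)) {ρ σ : KSet n k}, lexLt ρ.1 σ.1 →
      Submodule.span F (w '' {x : KSet n k | lexLt x.1 ρ.1})
        ≤ Submodule.span F (w '' {x : KSet n k | lexLt x.1 σ.1}) := by
    intro w ρ σ h
    apply Submodule.span_mono
    apply Set.image_mono
    intro x hx
    exact lexLt_trans hx h
  have hdiff : ∀ σ, v' σ - c σ • v σ ∈ sp σ := by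
    intro σ
    rw [hv' σ]
    rw [show (∑ τ : KSet n k, compound b k τ σ • v τ) - c σ • v σ
        = ∑ τ ∈ Finset.univ.erase σ, compound b k τ σ • v τ by
      rw [Finset.sum_erase_eq_sub (Finset.mem_univ σ)]]
    refine Submodule.sum_mem _ fun τ hτ => ?_
    by_cases hlt : lexLt τ.1 σ.1
    · exact Submodule.smul_mem _ _ (Submodule.subset_span ⟨τ, hlt, rfl⟩)
    · rw [compound_triangular htri (Finset.ne_of_mem_erase hτ) hlt, zero_smul]
      exact Submodule.zero_mem _
  have hspan : ∀ σ, sp' σ = sp σ := by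
    intro σ0
    refine hWF.induction (C := fun σ => sp' σ = sp σ) σ0 fun σ IH => ?_
    apply le_antisymm
    · rw [hsp'def]
      rw [Submodule.span_le]
      rintro _ ⟨ρ, hρ, rfl⟩
      have h1 : v' ρ - c ρ • v ρ ∈ sp σ := hmono v hρ (hdiff ρ)
      have h2 : c ρ • v ρ ∈ sp σ :=
        Submodule.smul_mem _ _ (Submodule.subset_span ⟨ρ, hρ, rfl⟩)
      have : v' ρ = (v' ρ - c ρ • v ρ) + c ρ • v ρ := by abel
      rw [this]
      exact Submodule.add_mem _ h1 h2
    · rw [hspdef]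
      rw [Submodule.span_le]
      rintro _ ⟨ρ, hρ, rfl⟩
      have h1 : v' ρ ∈ sp' σ := Submodule.subset_span ⟨ρ, hρ, rfl⟩
      have h2 : v' ρ - c ρ • v ρ ∈ sp' σ := by
        have := hdiff ρ
        rw [← IH ρ hρ] at this
        exact hmono v' hρ this
      have h3 : c ρ • v ρ ∈ sp' σ := by
        have : c ρ • v ρ = v' ρ - (v' ρ - c ρ • v ρ) := by abel
        rw [this]
        exact Submodule.sub_mem _ h1 h2
      have h4 : v ρ = (c ρ)⁻¹ • (c ρ • v ρ) := by
        rw [smul_smul, inv_mul_cancel₀ (hc ρ), one_smul]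
      rw [h4]
      exact Submodule.smul_mem _ _ h3
  have hiff : ∀ σ, (v' σ ∈ sp σ ↔ v σ ∈ sp σ) := by
    intro σ
    constructor
    · intro h
      have h2 : c σ • v σ ∈ sp σ := by
        have : c σ • v σ = v' σ - (v' σ - c σ • v σ) := by abel
        rw [this]
        exact Submodule.sub_mem _ h (hdiff σ)
      have h4 : v σ = (c σ)⁻¹ • (c σ • v σ) := by
        rw [smul_smul, inv_mul_cancel₀ (hc σ), one_smul]
      rw [h4]
      exact Submodule.smul_mem _ _ h2
    · intro h
      have : v' σ = (v' σ - c σ • v σ) + c σ • v σ := by abel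
      rw [this]
      exact Submodule.add_mem _ (hdiff σ) (Submodule.smul_mem _ _ h)
  ext σ
  show v' σ ∉ sp' σ ↔ v σ ∉ sp σ
  rw [hspan σ]
  exact not_congr (hiff σ)
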